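/- Let G be a group and A a finite subset of G with |AA^{-1}| ≠ |A^{-1}A|. Then |A| ≥ 4. Equivalently, for any group G and any finite subset A of G with |A| ≤ 3, one has |AA^{-1}| = |A^{-1}A|. -/

import Mathlib

open scoped Pointwise

section Aux

variable {G : Type*} [Group G] [DecidableEq G]

private theorem prod_eq_aux6 (x y : G) :
    ({1, x, y} : Finset G) * ({1, x, y} : Finset G)⁻¹ =
      ({1, x, x⁻¹, y, y⁻¹} : Finset G) ∪ {x * y⁻¹, y * x⁻¹} := by
  have hinv : ({1, x, y} : Finset G)⁻¹ = {1, x⁻¹, y⁻¹} := by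
    simp [Finset.inv_insert, Finset.inv_singleton]
  rw [hinv]
  ext g
  simp only [Finset.mem_mul, Finset.mem_insert, Finset.mem_singleton, Finset.mem_union]
  constructor
  · rintro ⟨a, ha, b, hb, rfl⟩
    rcases ha with rfl | rfl | rfl <;> rcases hb with rfl | rfl | rfl <;> simp
  · rintro ((rfl | rfl | rfl | rfl | rfl) | (rfl | rfl))
    · exact ⟨1, by simp, 1, by simp, by simp⟩
    · exact ⟨g, by simp, 1, by simp, by simp⟩
    · exact ⟨1, by simp, x⁻¹, by simp, by simp⟩
    · exact ⟨g, by simp, 1, by simp, by simp⟩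
    · exact ⟨1, by simp, y⁻¹, by simp, by simp⟩
    · exact ⟨x, by simp, y⁻¹, by simp, by simp⟩
    · exact ⟨y, by simp, x⁻¹, by simp, by simp⟩

private theorem swap_comm_aux6 {x y : G} (h : x * y⁻¹ = y * x⁻¹) :
    x⁻¹ * y = y⁻¹ * x := by
  have h2 := congrArg (fun z => y⁻¹ * z * y) h
  simpa [mul_assoc] using h2.symm

private theorem key3_aux6 (x y : G) (hx : x ≠ 1) (hy : y ≠ 1) (hxy : x ≠ y) :
    (({1, x, y} : Finset G) * ({1, x, y} : Finset G)⁻¹).card =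
      (({1, x, y} : Finset G)⁻¹ * ({1, x, y} : Finset G)).card := by
  have h2 : ({1, x, y} : Finset G)⁻¹ * ({1, x, y} : Finset G) =
      ({1, x⁻¹, y⁻¹} : Finset G) * ({1, x⁻¹, y⁻¹} : Finset G)⁻¹ := by
    congr 1
    · simp [Finset.inv_insert, Finset.inv_singleton]
    · simp [Finset.inv_insert, Finset.inv_singleton]
  rw [h2, prod_eq_aux6, prod_eq_aux6]
  simp only [inv_inv]
  have hS : ({1, x⁻¹, x, y⁻¹, y} : Finset G) = ({1, x, x⁻¹, y, y⁻¹} : Finset G) := by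
    ext g; simp; tauto
  rw [hS]
  set S : Finset G := {1, x, x⁻¹, y, y⁻¹} with hSdef
  have key_union : ∀ P : Finset G, (S ∪ P).card = S.card + (P \ S).card := by
    intro P
    rw [← Finset.union_sdiff_self_eq_union,
      Finset.card_union_of_disjoint Finset.disjoint_sdiff]
  rw [key_union, key_union]
  congr 1
  by_cases hc : x = y * y
  · subst hc
    have e1 : (y * y) * y⁻¹ = y := by group
    have e2 : y * (y * y)⁻¹ = y⁻¹ := by group
    have e3 : (y * y)⁻¹ * y = y⁻¹ := by group
    have e4 : y⁻¹ * (y * y) = y := by group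
    rw [e1, e2, e3, e4]
    have hmem : ({y, y⁻¹} : Finset G) \ S = ∅ := by
      rw [Finset.sdiff_eq_empty_iff_subset]
      intro g hg
      simp only [Finset.mem_insert, Finset.mem_singleton] at hg
      rcases hg with rfl | rfl <;> simp [hSdef]
    have hmem' : ({y⁻¹, y} : Finset G) \ S = ∅ := by
      rw [Finset.sdiff_eq_empty_iff_subset]
      intro g hg
      simp only [Finset.mem_insert, Finset.mem_singleton] at hg
      rcases hg with rfl | rfl <;> simp [hSdef]
    rw [hmem, hmem']
  by_cases hc2 : y = x * x
  · subst hc2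
    have e1 : x * (x * x)⁻¹ = x⁻¹ := by group
    have e2 : (x * x) * x⁻¹ = x := by group
    have e3 : x⁻¹ * (x * x) = x := by group
    have e4 : (x * x)⁻¹ * x = x⁻¹ := by group
    rw [e1, e2, e3, e4]
    have hmem : ({x⁻¹, x} : Finset G) \ S = ∅ := by
      rw [Finset.sdiff_eq_empty_iff_subset]
      intro g hg
      simp only [Finset.mem_insert, Finset.mem_singleton] at hg
      rcases hg with rfl | rfl <;> simp [hSdef]
    have hmem' : ({x, x⁻¹} : Finset G) \ S = ∅ := by
      rw [Finset.sdiff_eq_empty_iff_subset]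
      intro g hg
      simp only [Finset.mem_insert, Finset.mem_singleton] at hg
      rcases hg with rfl | rfl <;> simp [hSdef]
    rw [hmem, hmem']
  -- generic case: the extra pairs are disjoint from S
  have n1 : x * y⁻¹ ∉ S := by
    simp only [hSdef, Finset.mem_insert, Finset.mem_singleton, not_or]
    refine ⟨fun h => hxy (mul_inv_eq_one.mp h), fun h => hy (inv_eq_one.mp (mul_eq_left.mp h)),
      fun h => hc2 ?_, fun h => hc (mul_inv_eq_iff_eq_mul.mp h), fun h => hx ?_⟩
    · have := mul_inv_eq_iff_eq_mul.mp h
      exact (eq_inv_mul_iff_mul_eq.mp this).symm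
    · have := mul_inv_eq_iff_eq_mul.mp h
      simpa using this
  have n2 : y * x⁻¹ ∉ S := by
    simp only [hSdef, Finset.mem_insert, Finset.mem_singleton, not_or]
    refine ⟨fun h => hxy (mul_inv_eq_one.mp h).symm, fun h => hc2 (mul_inv_eq_iff_eq_mul.mp h),
      fun h => hy ?_, fun h => hx (inv_eq_one.mp (mul_eq_left.mp h)), fun h => hc ?_⟩
    · have := mul_inv_eq_iff_eq_mul.mp h
      simpa using this
    · have := mul_inv_eq_iff_eq_mul.mp h
      exact (eq_inv_mul_iff_mul_eq.mp this).symm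
  have n3 : x⁻¹ * y ∉ S := by
    simp only [hSdef, Finset.mem_insert, Finset.mem_singleton, not_or]
    refine ⟨fun h => hxy (inv_mul_eq_one.mp h), fun h => hc2 (inv_mul_eq_iff_eq_mul.mp h),
      fun h => hy (mul_eq_left.mp h), fun h => hx (inv_eq_one.mp (mul_eq_right.mp h)),
      fun h => hc ?_⟩
    · have := inv_mul_eq_iff_eq_mul.mp h
      exact mul_inv_eq_iff_eq_mul.mp this.symm
  have n4 : y⁻¹ * x ∉ S := by
    simp only [hSdef, Finset.mem_insert, Finset.mem_singleton, not_or]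
    exact ⟨fun h => hxy (inv_mul_eq_one.mp h).symm,
      fun h => hy (inv_eq_one.mp (mul_eq_right.mp h)),
      fun h => hc2 (mul_inv_eq_iff_eq_mul.mp (inv_mul_eq_iff_eq_mul.mp h).symm),
      fun h => hc (inv_mul_eq_iff_eq_mul.mp h),
      fun h => hx (mul_eq_left.mp h)⟩
  have d1 : ({x * y⁻¹, y * x⁻¹} : Finset G) \ S = {x * y⁻¹, y * x⁻¹} := by
    rw [Finset.sdiff_eq_self_iff_disjoint, Finset.disjoint_left]
    intro g hg
    simp only [Finset.mem_insert, Finset.mem_singleton] at hg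
    rcases hg with rfl | rfl
    · exact n1
    · exact n2
  have d2 : ({x⁻¹ * y, y⁻¹ * x} : Finset G) \ S = {x⁻¹ * y, y⁻¹ * x} := by
    rw [Finset.sdiff_eq_self_iff_disjoint, Finset.disjoint_left]
    intro g hg
    simp only [Finset.mem_insert, Finset.mem_singleton] at hg
    rcases hg with rfl | rfl
    · exact n3
    · exact n4
  rw [d1, d2]
  by_cases ho : x * y⁻¹ = y * x⁻¹
  · have ho' : x⁻¹ * y = y⁻¹ * x := swap_comm_aux6 ho
    rw [ho, ho']
    simp
  · have ho' : x⁻¹ * y ≠ y⁻¹ * x := by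
      intro h
      have h2 := congrArg (fun z => x * z * x⁻¹) h
      exact ho (by simpa [mul_assoc] using h2.symm)
    rw [Finset.card_insert_of_notMem (by simpa using ho),
      Finset.card_insert_of_notMem (by simpa using ho')]
    simp

private theorem key2_aux6 (x : G) :
    (({1, x} : Finset G) * ({1, x} : Finset G)⁻¹).card =
      (({1, x} : Finset G)⁻¹ * ({1, x} : Finset G)).card := by
  have hinv : ({1, x} : Finset G)⁻¹ = {1, x⁻¹} := by
    simp [Finset.inv_insert, Finset.inv_singleton]
  have e1 : ({1, x} : Finset G) * ({1, x} : Finset G)⁻¹ = {1, x, x⁻¹} := by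
    rw [hinv]
    ext g
    simp only [Finset.mem_mul, Finset.mem_insert, Finset.mem_singleton]
    constructor
    · rintro ⟨a, ha, b, hb, rfl⟩
      rcases ha with rfl | rfl <;> rcases hb with rfl | rfl <;> simp
    · rintro (rfl | rfl | rfl)
      · exact ⟨1, by simp, 1, by simp, by simp⟩
      · exact ⟨g, by simp, 1, by simp, by simp⟩
      · exact ⟨1, by simp, x⁻¹, by simp, by simp⟩
  have e2 : ({1, x} : Finset G)⁻¹ * ({1, x} : Finset G) = {1, x⁻¹, x} := by
    rw [hinv]
    ext g
    simp only [Finset.mem_mul, Finset.mem_insert, Finset.mem_singleton]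
    constructor
    · rintro ⟨a, ha, b, hb, rfl⟩
      rcases ha with rfl | rfl <;> rcases hb with rfl | rfl <;> simp
    · rintro (rfl | rfl | rfl)
      · exact ⟨1, by simp, 1, by simp, by simp⟩
      · exact ⟨x⁻¹, by simp, 1, by simp, by simp⟩
      · exact ⟨1, by simp, g, by simp, by simp⟩
  rw [e1, e2]
  congr 1
  ext g; simp; tauto

/-- translation invariance -/
private theorem translate_aux6 (A : Finset G) (a : G) :
    ((A * {a}) * (A * {a})⁻¹ = A * A⁻¹) ∧
      ((A * {a})⁻¹ * (A * {a})).card = (A⁻¹ * A).card := by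
  constructor
  · rw [mul_inv_rev]
    calc A * {a} * ({a}⁻¹ * A⁻¹) = A * ({a} * {a}⁻¹) * A⁻¹ := by
          simp only [mul_assoc]
      _ = A * A⁻¹ := by
          rw [Finset.inv_singleton, Finset.singleton_mul_singleton, mul_inv_cancel,
            Finset.singleton_one, mul_one]
  · rw [mul_inv_rev]
    have : {a}⁻¹ * A⁻¹ * (A * {a}) = {a}⁻¹ * (A⁻¹ * A) * {a} := by
      simp only [mul_assoc]
    rw [this, Finset.inv_singleton, Finset.card_mul_singleton, Finset.card_singleton_mul]

end Aux

/-- If `A` is a finite subset of a group `G` with `|A * A⁻¹| ≠ |A⁻¹ * A|`, then `|A| ≥ 4`. -/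
theorem stmt_6 {G : Type*} [Group G] [DecidableEq G] (A : Finset G)
    (h : (A * A⁻¹).card ≠ (A⁻¹ * A).card) :
    4 ≤ A.card := by
  by_contra hlt
  push_neg at hlt
  -- A is nonempty
  rcases A.eq_empty_or_nonempty with rfl | ⟨a, ha⟩
  · simp at h
  -- translate so that 1 ∈ B
  set B : Finset G := A * {a⁻¹} with hB
  obtain ⟨hBprod, hBcard⟩ := translate_aux6 A a⁻¹
  have hne : (B * B⁻¹).card ≠ (B⁻¹ * B).card := by
    rw [hB, hBprod, hBcard]; exact h
  have hBA : B.card = A.card := Finset.card_mul_singleton A a⁻¹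
  have h1B : (1 : G) ∈ B := by
    rw [hB]
    have := Finset.mul_mem_mul ha (Finset.mem_singleton_self a⁻¹)
    rwa [mul_inv_cancel] at this
  -- now case on B.card
  have hcard : B.card < 4 := by rw [hBA]; exact hlt
  have hpos : 0 < B.card := Finset.card_pos.mpr ⟨1, h1B⟩
  interval_cases hc : B.card
  · -- card 1
    obtain ⟨u, hu⟩ := Finset.card_eq_one.mp hc
    have : u = 1 := by rw [hu] at h1B; exact (Finset.mem_singleton.mp h1B).symm
    subst this
    rw [hu] at hne
    exact hne (by rw [Finset.inv_singleton, inv_one])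
  · -- card 2
    obtain ⟨u, v, huv, huvB⟩ := Finset.card_eq_two.mp hc
    rw [huvB] at h1B
    simp only [Finset.mem_insert, Finset.mem_singleton] at h1B
    rcases h1B with rfl | rfl
    · rw [huvB] at hne
      exact hne (key2_aux6 v)
    · rw [huvB, Finset.pair_comm] at hne
      exact hne (key2_aux6 u)
  · -- card 3
    obtain ⟨u, v, w, huv, huw, hvw, hB3⟩ := Finset.card_eq_three.mp hc
    rw [hB3] at h1B hne
    simp only [Finset.mem_insert, Finset.mem_singleton] at h1B
    rcases h1B with rfl | rfl | rfl
    · exact hne (key3_aux6 v w (Ne.symm huv) (Ne.symm huw) hvw)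
    · rw [Finset.insert_comm u 1 {w}] at hne
      exact hne (key3_aux6 u w huv (Ne.symm hvw) huw)
    · rw [show ({u, v, 1} : Finset G) = {1, u, v} from by
        ext a; simp only [Finset.mem_insert, Finset.mem_singleton]; tauto] at hne
      exact hne (key3_aux6 u v huw hvw huv)
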